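/- Let λ ∈ (−1/2, ∞)^n. Define Ξ_λ(x,z,t) = Π_{j=1}^n (x_j+z_j)^{2λ_j} / V_{√t}^{λ_j,+}(x_j) for x ∈ (0,∞)^n, z ∈ ℝ^n with x+z ∈ (0,∞)^n, and t > 0, where V_s^{λ_j,+}(x_j) is the w_{λ_j}^+-measure of (x_j−s, x_j+s) ∩ (0,∞). Then ∫_{|z|<√t} Ξ_λ(x,z,t)·χ_{{x+z ∈ (0,∞)^n}} dz ≃ 1 uniformly in x ∈ (0,∞)^n and t > 0; i.e., there are constants c, C > 0 depending only on λ and n such that c ≤ ∫_{|z|<√t} Ξ_λ(x,z,t) χ_{{x+z∈(0,∞)^n}} dz ≤ C. -/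

import Mathlib

open MeasureTheory
open scoped BigOperators

/-- `V_s^{λ,+}(x)`, the `w_λ^+` measure of `(x-s,x+s) ∩ (0,∞)`. -/
noncomputable def Vplus (l x s : ℝ) : ℝ :=
  ∫ u in Set.Ioo (x - s) (x + s) ∩ Set.Ioi (0 : ℝ), u ^ (2 * l)

/-- `Ξ_λ(x,z,t) = ∏_j (x_j+z_j)^{2λ_j} / V_{√t}^{λ_j,+}(x_j)`. -/
noncomputable def Xi {n : ℕ} (l : Fin n → ℝ) (x z : EuclideanSpace ℝ (Fin n)) (t : ℝ) : ℝ :=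
  ∏ j, (x j + z j) ^ (2 * l j) / Vplus (l j) (x j) (Real.sqrt t)

open Set Real

lemma rpow_integrableOn_Ioo {a : ℝ} (ha : -1 < a) (m b : ℝ) :
    IntegrableOn (fun u : ℝ => u ^ a) (Set.Ioo m b) := by
  rcases le_or_gt b m with h | h
  · simp [Set.Ioo_eq_empty (not_lt.2 h)]
  · exact (intervalIntegrable_iff_integrableOn_Ioo_of_le h.le).1 (intervalIntegral.intervalIntegrable_rpow' ha)

lemma Vplus_eq (l x s : ℝ) :
    Vplus l x s = ∫ u in Set.Ioo (max (x - s) 0) (x + s), u ^ (2 * l) := by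
  rw [Vplus, Set.Ioo_inter_Ioi]

example : True := trivial

lemma Vplus_lower {l : ℝ} (hl : -1/2 < l) {x s : ℝ} (hx : 0 < x) (hs : 0 < s) :
    2 ^ (-(1 + |2 * l|)) * (s * (x + s) ^ (2 * l)) ≤ Vplus l x s := by
  have ha : (-1:ℝ) < 2 * l := by linarith
  set a := 2 * l with ha_def
  set m := max (x - s) 0 with hm_def
  set b := x + s with hb_def
  have hb : 0 < b := by positivity
  have hm0 : 0 ≤ m := le_max_right _ _
  have hmb : m < b := by
    rcases max_cases (x - s) 0 with ⟨h1, _⟩ | ⟨h1, _⟩ <;> rw [hm_def, h1, hb_def] <;> linarith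
  have hbm1 : s ≤ b - m := by
    rcases max_cases (x - s) 0 with ⟨h1, h2⟩ | ⟨h1, h2⟩ <;> rw [hm_def, h1, hb_def] <;> linarith
  rw [Vplus_eq]
  have hJsub : Set.Ioo ((m + b)/2) b ⊆ Set.Ioo m b :=
    Set.Ioo_subset_Ioo_left (by linarith)
  have hcpos : (0:ℝ) < 2 ^ (-|a|) * b ^ a := by positivity
  have step1 : ∀ u ∈ Set.Ioo ((m+b)/2) b, 2 ^ (-|a|) * b ^ a ≤ u ^ a := by
    intro u hu
    obtain ⟨hu1, hu2⟩ := hu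
    have hu0 : b/2 ≤ u := le_trans (by linarith) hu1.le
    have hupos : 0 < u := lt_of_lt_of_le (by positivity) hu0
    rcases le_or_gt 0 a with h | h
    · rw [abs_of_nonneg h]
      calc 2 ^ (-a) * b ^ a = (b/2) ^ a := by
            rw [Real.div_rpow hb.le (by norm_num : (0:ℝ) ≤ 2), Real.rpow_neg (by norm_num : (0:ℝ) ≤ 2)]
            ring
        _ ≤ u ^ a := Real.rpow_le_rpow (by positivity) hu0 h
    · rw [abs_of_neg h, neg_neg]
      calc 2 ^ a * b ^ a ≤ 1 * b ^ a := by
            apply mul_le_mul_of_nonneg_right _ (Real.rpow_nonneg hb.le a)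
            exact Real.rpow_le_one_of_one_le_of_nonpos one_le_two h.le
        _ = b ^ a := one_mul _
        _ ≤ u ^ a := Real.rpow_le_rpow_of_nonpos hupos hu2.le h.le
  have int1 : IntegrableOn (fun u : ℝ => u ^ a) (Set.Ioo m b) := rpow_integrableOn_Ioo ha m b
  have int2 : IntegrableOn (fun u : ℝ => u ^ a) (Set.Ioo ((m+b)/2) b) := int1.mono_set hJsub
  have intc : IntegrableOn (fun _ : ℝ => 2 ^ (-|a|) * b ^ a) (Set.Ioo ((m+b)/2) b) := by
    refine integrableOn_const ?_
    exact measure_Ioo_lt_top.ne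
  have nonneg : 0 ≤ᵐ[volume.restrict (Set.Ioo m b)] fun u : ℝ => u ^ a := by
    filter_upwards [ae_restrict_mem measurableSet_Ioo] with u hu
    exact Real.rpow_nonneg (le_trans hm0 hu.1.le) a
  calc 2 ^ (-(1 + |a|)) * (s * b ^ a)
      = (s/2) * (2 ^ (-|a|) * b ^ a) := by
        rw [neg_add, Real.rpow_add (by norm_num : (0:ℝ) < 2), Real.rpow_neg_one]
        ring
    _ ≤ ((b - (m+b)/2)) * (2 ^ (-|a|) * b ^ a) := by
        apply mul_le_mul_of_nonneg_right _ hcpos.le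
        linarith
    _ = ∫ _ in Set.Ioo ((m+b)/2) b, 2 ^ (-|a|) * b ^ a := by
        rw [setIntegral_const, Real.volume_real_Ioo, max_eq_left (by linarith), smul_eq_mul]
    _ ≤ ∫ u in Set.Ioo ((m+b)/2) b, u ^ a := setIntegral_mono_on intc int2 measurableSet_Ioo step1
    _ ≤ ∫ u in Set.Ioo m b, u ^ a :=
        setIntegral_mono_set int1 nonneg (HasSubset.Subset.eventuallyLE hJsub)

lemma Vplus_upper {l : ℝ} (hl : -1/2 < l) {x s : ℝ} (hx : 0 < x) (hs : 0 < s) :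
    Vplus l x s ≤ (4 / (2 * l + 1) + 2 * 2 ^ |2 * l|) * (s * (x + s) ^ (2 * l)) := by
  have ha : (-1:ℝ) < 2 * l := by linarith
  have ha1 : (0:ℝ) < 2 * l + 1 := by linarith
  set a := 2 * l with ha_def
  set m := max (x - s) 0 with hm_def
  set b := x + s with hb_def
  have hb : 0 < b := by positivity
  have hm0 : 0 ≤ m := le_max_right _ _
  have hmb : m < b := by
    rcases max_cases (x - s) 0 with ⟨h1, _⟩ | ⟨h1, _⟩ <;> rw [hm_def, h1, hb_def] <;> linarith
  have hbm2 : b - m ≤ 2 * s := by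
    rcases max_cases (x - s) 0 with ⟨h1, h2⟩ | ⟨h1, h2⟩ <;> rw [hm_def, h1, hb_def] <;> linarith
  have hba : (0:ℝ) ≤ b ^ a := Real.rpow_nonneg hb.le a
  have key2 : (0:ℝ) < 2 ^ |a| := by positivity
  rw [Vplus_eq]
  rcases lt_or_ge m (b/2) with hcase | hcase
  · have hb4 : b ≤ 4 * s := by
      have h1 : x - s ≤ m := le_max_left _ _
      have h2 : m < b/2 := hcase
      rw [hb_def] at h2 ⊢
      linarith
    have nonneg0 : 0 ≤ᵐ[volume.restrict (Set.Ioo (0:ℝ) b)] fun u : ℝ => u ^ a := by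
      filter_upwards [ae_restrict_mem measurableSet_Ioo] with u hu
      exact Real.rpow_nonneg hu.1.le a
    calc ∫ u in Set.Ioo m b, u ^ a
        ≤ ∫ u in Set.Ioo 0 b, u ^ a := by
          apply setIntegral_mono_set (rpow_integrableOn_Ioo ha 0 b) nonneg0
          exact HasSubset.Subset.eventuallyLE (Set.Ioo_subset_Ioo_left hm0)
      _ = b ^ (a + 1) / (a + 1) := by
          rw [← MeasureTheory.integral_Ioc_eq_integral_Ioo,
            ← intervalIntegral.integral_of_le hb.le,
            integral_rpow (Or.inl ha),
            Real.zero_rpow (by linarith : a + 1 ≠ 0), sub_zero]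
      _ ≤ 4 / (a + 1) * (s * b ^ a) := by
          rw [Real.rpow_add_one hb.ne' a,
            show 4 / (a+1) * (s * b ^ a) = b ^ a * (4 * s) / (a+1) by ring,
            div_le_div_iff_of_pos_right (by linarith : (0:ℝ) < a + 1)]
          exact mul_le_mul_of_nonneg_left hb4 hba
      _ ≤ (4 / (a + 1) + 2 * 2 ^ |a|) * (s * b ^ a) := by
          apply mul_le_mul_of_nonneg_right _ (by positivity)
          nlinarith
  · have hmpos : 0 < m := lt_of_lt_of_le (by positivity) hcase
    have step : ∀ u ∈ Set.Ioo m b, u ^ a ≤ 2 ^ |a| * b ^ a := by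
      rintro u ⟨hu1, hu2⟩
      have hupos : 0 < u := hmpos.trans hu1
      rcases le_or_gt 0 a with h | h
      · rw [abs_of_nonneg h]
        have h1 : u ^ a ≤ b ^ a := Real.rpow_le_rpow hupos.le hu2.le h
        have h2 : (1:ℝ) ≤ 2 ^ a := by
          calc (1:ℝ) = 2 ^ (0:ℝ) := (Real.rpow_zero 2).symm
            _ ≤ 2 ^ a := Real.rpow_le_rpow_of_exponent_le one_le_two h
        nlinarith
      · rw [abs_of_neg h]
        have h1 : u ^ a ≤ m ^ a := Real.rpow_le_rpow_of_nonpos hmpos hu1.le h.le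
        have h2 : m ^ a ≤ (b/2) ^ a := Real.rpow_le_rpow_of_nonpos (by positivity) hcase h.le
        have h3 : (b/2) ^ a = 2 ^ (-a) * b ^ a := by
          rw [Real.div_rpow hb.le (by norm_num : (0:ℝ) ≤ 2),
            Real.rpow_neg (by norm_num : (0:ℝ) ≤ 2)]
          ring
        linarith
    have intc : IntegrableOn (fun _ : ℝ => 2 ^ |a| * b ^ a) (Set.Ioo m b) :=
      integrableOn_const measure_Ioo_lt_top.ne
    calc ∫ u in Set.Ioo m b, u ^ a
        ≤ ∫ _ in Set.Ioo m b, 2 ^ |a| * b ^ a :=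
          setIntegral_mono_on (rpow_integrableOn_Ioo ha m b) intc measurableSet_Ioo step
      _ = (b - m) * (2 ^ |a| * b ^ a) := by
          rw [setIntegral_const, Real.volume_real_Ioo, max_eq_left (by linarith), smul_eq_mul]
      _ ≤ 2 * 2 ^ |a| * (s * b ^ a) := by nlinarith [mul_le_mul_of_nonneg_right hbm2 (mul_nonneg key2.le hba)]
      _ ≤ (4 / (a + 1) + 2 * 2 ^ |a|) * (s * b ^ a) := by
          apply mul_le_mul_of_nonneg_right _ (by positivity)
          have : 0 < 4 / (a + 1) := by positivity
          linarith

lemma Vplus_pos {l : ℝ} (hl : -1/2 < l) {x s : ℝ} (hx : 0 < x) (hs : 0 < s) :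
    0 < Vplus l x s :=
  lt_of_lt_of_le (by positivity) (Vplus_lower hl hx hs)

lemma Vplus_ratio {l : ℝ} (hl : -1/2 < l) {r : ℝ} (hr : 1 ≤ r) :
    ∃ κ : ℝ, 0 < κ ∧ ∀ x s : ℝ, 0 < x → 0 < s → κ * Vplus l x s ≤ Vplus l x (s / r) := by
  have ha : (-1:ℝ) < 2 * l := by linarith
  have ha1 : (0:ℝ) < 2 * l + 1 := by linarith
  have hrpos : (0:ℝ) < r := lt_of_lt_of_le one_pos hr
  set a := 2 * l with ha_def
  set c0 := (2:ℝ) ^ (-(1 + |a|)) with hc0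
  set C0 := 4 / (a + 1) + 2 * 2 ^ |a| with hC0
  have hc0pos : 0 < c0 := by positivity
  have hC0pos : 0 < C0 := add_pos (div_pos (by norm_num) (by linarith)) (by positivity)
  refine ⟨c0 / (C0 * r ^ (1 + |a|)), by positivity, ?_⟩
  intro x s hx hs
  have hs' : 0 < s / r := div_pos hs hrpos
  have L := Vplus_lower hl hx hs'
  have U := Vplus_upper hl hx hs
  have hxs' : 0 < x + s / r := by positivity
  have key : (x + s) ^ a ≤ r ^ |a| * (x + s / r) ^ a := by
    rcases le_or_gt 0 a with h | h
    · rw [abs_of_nonneg h]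
      have e1 : r * (x + s / r) = r * x + s := by field_simp
      have h1 : x + s ≤ r * (x + s / r) := by
        rw [e1]
        have := le_mul_of_one_le_left hx.le hr
        linarith
      calc (x + s) ^ a ≤ (r * (x + s / r)) ^ a := Real.rpow_le_rpow (by positivity) h1 h
        _ = r ^ a * (x + s / r) ^ a := Real.mul_rpow hrpos.le hxs'.le
    · rw [abs_of_neg h]
      have h1 : x + s / r ≤ x + s := by
        have := div_le_self hs.le hr
        linarith
      have h2 : (x + s) ^ a ≤ (x + s / r) ^ a := Real.rpow_le_rpow_of_nonpos hxs' h1 h.le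
      have h3 : (1:ℝ) ≤ r ^ (-a) := by
        calc (1:ℝ) = r ^ (0:ℝ) := (Real.rpow_zero r).symm
          _ ≤ r ^ (-a) := Real.rpow_le_rpow_of_exponent_le hr (by linarith)
      nlinarith [Real.rpow_nonneg hxs'.le a]
  have U2 : Vplus l x s ≤ C0 * r ^ (1 + |a|) * (s / r * (x + s / r) ^ a) := by
    calc Vplus l x s ≤ C0 * (s * (x + s) ^ a) := U
      _ ≤ C0 * (s * (r ^ |a| * (x + s / r) ^ a)) := by
          apply mul_le_mul_of_nonneg_left _ hC0pos.le
          exact mul_le_mul_of_nonneg_left key hs.le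
      _ = C0 * r ^ (1 + |a|) * (s / r * (x + s / r) ^ a) := by
          rw [Real.rpow_add hrpos, Real.rpow_one]
          field_simp
  have hden : (0:ℝ) < C0 * r ^ (1 + |a|) := by positivity
  calc c0 / (C0 * r ^ (1 + |a|)) * Vplus l x s
      ≤ c0 / (C0 * r ^ (1 + |a|)) * (C0 * r ^ (1 + |a|) * (s / r * (x + s / r) ^ a)) :=
        mul_le_mul_of_nonneg_left U2 (by positivity)
    _ = c0 * (s / r * (x + s / r) ^ a) := by field_simp
    _ ≤ Vplus l x (s / r) := L

lemma indicator_shift (l x V σ : ℝ) (u : ℝ) :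
    Set.indicator (Set.Ioo (-σ) σ ∩ Set.Ioi (-x)) (fun u => (x + u) ^ (2 * l) / V) u
      = Set.indicator (Set.Ioo (x - σ) (x + σ) ∩ Set.Ioi 0) (fun v => v ^ (2 * l) / V) (x + u) := by
  by_cases h : u ∈ Set.Ioo (-σ) σ ∩ Set.Ioi (-x)
  · have h' := h
    simp only [Set.mem_inter_iff, Set.mem_Ioo, Set.mem_Ioi] at h'
    obtain ⟨⟨h1, h2⟩, h3⟩ := h'
    rw [Set.indicator_of_mem h, Set.indicator_of_mem]
    simp only [Set.mem_inter_iff, Set.mem_Ioo, Set.mem_Ioi]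
    exact ⟨⟨by linarith, by linarith⟩, by linarith⟩
  · rw [Set.indicator_of_notMem h, Set.indicator_of_notMem]
    simp only [Set.mem_inter_iff, Set.mem_Ioo, Set.mem_Ioi] at h ⊢
    intro hmem
    exact h ⟨⟨by linarith [hmem.1.1], by linarith [hmem.1.2]⟩, by linarith [hmem.2]⟩

lemma f_one_int (l x V σ : ℝ) :
    ∫ u in Set.Ioo (-σ) σ, Set.indicator (Set.Ioi (-x)) (fun u => (x + u) ^ (2 * l) / V) u
      = Vplus l x σ / V := by
  rw [setIntegral_indicator measurableSet_Ioi,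
    ← integral_indicator (measurableSet_Ioo.inter measurableSet_Ioi)]
  simp_rw [indicator_shift l x V σ]
  rw [integral_add_left_eq_self
    (Set.indicator (Set.Ioo (x - σ) (x + σ) ∩ Set.Ioi 0) (fun v => v ^ (2 * l) / V)) x,
    integral_indicator (measurableSet_Ioo.inter measurableSet_Ioi), integral_div]
  rw [Vplus]

lemma f_one_intgr {l : ℝ} (hl : -1/2 < l) (x V σ : ℝ) :
    Integrable (Set.indicator (Set.Ioo (-σ) σ)
      (Set.indicator (Set.Ioi (-x)) (fun u => (x + u) ^ (2 * l) / V))) := by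
  rw [Set.indicator_indicator]
  have h1 : Integrable (Set.indicator (Set.Ioo (x - σ) (x + σ) ∩ Set.Ioi 0)
      (fun v : ℝ => v ^ (2 * l) / V)) := by
    rw [integrable_indicator_iff (measurableSet_Ioo.inter measurableSet_Ioi), Set.Ioo_inter_Ioi]
    exact (rpow_integrableOn_Ioo (by linarith) _ _).div_const V
  have h2 := h1.comp_add_left x
  have e : Set.indicator (Set.Ioo (-σ) σ ∩ Set.Ioi (-x)) (fun u => (x + u) ^ (2 * l) / V)
      = fun u => Set.indicator (Set.Ioo (x - σ) (x + σ) ∩ Set.Ioi 0)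
          (fun v : ℝ => v ^ (2 * l) / V) (x + u) := funext (indicator_shift l x V σ)
  rw [e]
  exact h2

open scoped BigOperators

lemma indicator_pi_prod {n : ℕ} (F : Fin n → ℝ → ℝ) (σ : ℝ) (y : Fin n → ℝ) :
    Set.indicator (Set.univ.pi fun _ : Fin n => Set.Ioo (-σ) σ) (fun y => ∏ j, F j (y j)) y
      = ∏ j, Set.indicator (Set.Ioo (-σ) σ) (F j) (y j) := by
  by_cases h : y ∈ Set.univ.pi fun _ : Fin n => Set.Ioo (-σ) σ
  · rw [Set.indicator_of_mem h]
    exact Finset.prod_congr rfl fun j _ => (Set.indicator_of_mem (h j (Set.mem_univ j)) _).symm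
  · rw [Set.indicator_of_notMem h]
    rw [Set.mem_univ_pi] at h
    push_neg at h
    obtain ⟨j0, hj0⟩ := h
    exact (Finset.prod_eq_zero (Finset.mem_univ j0) (Set.indicator_of_notMem hj0 _)).symm

lemma cube_int {n : ℕ} (F : Fin n → ℝ → ℝ) (σ : ℝ) :
    ∫ y in Set.univ.pi (fun _ : Fin n => Set.Ioo (-σ) σ), ∏ j, F j (y j)
      = ∏ j, ∫ u in Set.Ioo (-σ) σ, F j u := by
  rw [← integral_indicator (MeasurableSet.univ_pi fun _ => measurableSet_Ioo)]
  simp_rw [indicator_pi_prod F σ]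
  rw [MeasureTheory.integral_fintype_prod_volume_eq_prod
    (f := fun j u => Set.indicator (Set.Ioo (-σ) σ) (F j) u)]
  exact Finset.prod_congr rfl fun j _ => integral_indicator measurableSet_Ioo


theorem stmt6 {n : ℕ} (l : Fin n → ℝ) (hl : ∀ j, -1/2 < l j) :
    ∃ c C : ℝ, 0 < c ∧ 0 < C ∧
      ∀ (x : EuclideanSpace ℝ (Fin n)) (t : ℝ), (∀ j, 0 < x j) → 0 < t →
        c ≤ (∫ z in Metric.ball (0 : EuclideanSpace ℝ (Fin n)) (Real.sqrt t),
              Set.indicator {z : EuclideanSpace ℝ (Fin n) | ∀ j, 0 < x j + z j}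
                (fun z => Xi l x z t) z) ∧
        (∫ z in Metric.ball (0 : EuclideanSpace ℝ (Fin n)) (Real.sqrt t),
              Set.indicator {z : EuclideanSpace ℝ (Fin n) | ∀ j, 0 < x j + z j}
                (fun z => Xi l x z t) z) ≤ C := by
  classical
  have hr1 : (1:ℝ) ≤ Real.sqrt ((n:ℝ) + 1) := by
    have h0 : (0:ℝ) ≤ (n:ℝ) := Nat.cast_nonneg n
    have := Real.sqrt_le_sqrt (show (1:ℝ) ≤ (n:ℝ) + 1 by linarith)
    simpa using this
  choose κ hκpos hκ using fun j => Vplus_ratio (hl j) hr1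
  refine ⟨∏ j, κ j, 1, Finset.prod_pos (fun j _ => hκpos j), one_pos, ?_⟩
  intro x t hx ht
  set s := Real.sqrt t with hsdef
  have hs : 0 < s := Real.sqrt_pos.2 ht
  have hrpos : (0:ℝ) < Real.sqrt ((n:ℝ) + 1) := lt_of_lt_of_le one_pos hr1
  set s' := s / Real.sqrt ((n:ℝ) + 1) with hs'def
  have hs'pos : 0 < s' := div_pos hs hrpos
  set f : Fin n → ℝ → ℝ := fun j =>
    Set.indicator (Set.Ioi (-(x j)))
      (fun u => (x j + u) ^ (2 * l j) / Vplus (l j) (x j) s) with hfdef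
  have hVpos : ∀ j, 0 < Vplus (l j) (x j) s := fun j => Vplus_pos (hl j) (hx j) hs
  have hf0 : ∀ j u, 0 ≤ f j u := by
    intro j u
    apply Set.indicator_nonneg
    intro u hu
    have h1 : 0 < x j + u := by have := Set.mem_Ioi.1 hu; linarith
    exact div_nonneg (Real.rpow_nonneg h1.le _) (hVpos j).le
  have hg_eq : ∀ z : EuclideanSpace ℝ (Fin n),
      Set.indicator {z : EuclideanSpace ℝ (Fin n) | ∀ j, 0 < x j + z j}
        (fun z => Xi l x z t) z = ∏ j, f j (z j) := by
    intro z
    by_cases h : ∀ j, 0 < x j + z j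
    · rw [Set.indicator_of_mem
        (show z ∈ {z : EuclideanSpace ℝ (Fin n) | ∀ j, 0 < x j + z j} from h)]
      simp only [Xi, hfdef, ← hsdef]
      refine Finset.prod_congr rfl fun j _ => ?_
      rw [Set.indicator_of_mem (Set.mem_Ioi.2 (by linarith [h j]))]
    · rw [Set.indicator_of_notMem
        (show z ∉ {z : EuclideanSpace ℝ (Fin n) | ∀ j, 0 < x j + z j} from h)]
      push_neg at h
      obtain ⟨j0, hj0⟩ := h
      symm
      apply Finset.prod_eq_zero (Finset.mem_univ j0)
      simp only [hfdef]
      apply Set.indicator_of_notMem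
      simp only [Set.mem_Ioi, not_lt]
      linarith
  have mp := EuclideanSpace.volume_preserving_symm_measurableEquiv_toLp (Fin n)
  have me := (MeasurableEquiv.toLp 2 (Fin n → ℝ)).symm.measurableEmbedding
  set Q : ℝ → Set (EuclideanSpace ℝ (Fin n)) := fun σ =>
    (MeasurableEquiv.toLp 2 (Fin n → ℝ)).symm ⁻¹'
      (Set.univ.pi fun _ : Fin n => Set.Ioo (-σ) σ) with hQdef
  have hQmeas : ∀ σ, MeasurableSet (Q σ) := fun σ =>
    (MeasurableSet.univ_pi fun _ => measurableSet_Ioo).preimage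
      (MeasurableEquiv.toLp 2 (Fin n → ℝ)).symm.measurable
  have transfer : ∀ σ : ℝ, (∫ z in Q σ, ∏ j, f j (z j))
      = ∏ j, ∫ u in Set.Ioo (-σ) σ, f j u := by
    intro σ
    rw [← cube_int f σ]
    exact mp.setIntegral_preimage_emb me (fun y : Fin n → ℝ => ∏ j, f j (y j))
      (Set.univ.pi fun _ : Fin n => Set.Ioo (-σ) σ)
  have hGint : Integrable
      (fun y : Fin n → ℝ => ∏ j, Set.indicator (Set.Ioo (-s) s) (f j) (y j)) := by
    apply Integrable.fintype_prod
    intro j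
    simp only [hfdef]
    exact f_one_intgr (hl j) (x j) (Vplus (l j) (x j) s) s
  have hint : IntegrableOn (fun z : EuclideanSpace ℝ (Fin n) => ∏ j, f j (z j)) (Q s) := by
    have h0 : IntegrableOn
        ((fun y : Fin n → ℝ => ∏ j, f j (y j)) ∘ (MeasurableEquiv.toLp 2 (Fin n → ℝ)).symm)
        ((MeasurableEquiv.toLp 2 (Fin n → ℝ)).symm ⁻¹'
          (Set.univ.pi fun _ : Fin n => Set.Ioo (-s) s)) := by
      rw [mp.integrableOn_comp_preimage me]
      have e1 : Set.indicator (Set.univ.pi fun _ : Fin n => Set.Ioo (-s) s)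
          (fun y : Fin n → ℝ => ∏ j, f j (y j))
          = fun y => ∏ j, Set.indicator (Set.Ioo (-s) s) (f j) (y j) :=
        funext (indicator_pi_prod f s)
      apply (integrable_indicator_iff (MeasurableSet.univ_pi fun _ => measurableSet_Ioo)).1
      rw [e1]
      exact hGint
    exact h0
  have coord : ∀ (z : EuclideanSpace ℝ (Fin n)) (j : Fin n), |z j| ≤ ‖z‖ := by
    intro z j
    have h1 : ‖z j‖ ^ 2 ≤ ∑ i, ‖z i‖ ^ 2 :=
      Finset.single_le_sum (f := fun i => ‖z i‖ ^ 2) (fun i _ => sq_nonneg _) (Finset.mem_univ j)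
    have h2 := Real.sqrt_le_sqrt h1
    rw [Real.sqrt_sq (norm_nonneg _)] at h2
    rw [EuclideanSpace.norm_eq]
    calc |z j| = ‖z j‖ := (Real.norm_eq_abs _).symm
      _ ≤ _ := h2
  have hsub1 : Metric.ball (0 : EuclideanSpace ℝ (Fin n)) s ⊆ Q s := by
    intro z hz
    rw [mem_ball_zero_iff] at hz
    intro j _
    have h1 := lt_of_le_of_lt (coord z j) hz
    have h2 := abs_lt.1 h1
    exact ⟨h2.1, h2.2⟩
  have hsub2 : Q s' ⊆ Metric.ball (0 : EuclideanSpace ℝ (Fin n)) s := by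
    intro z hz
    rw [mem_ball_zero_iff]
    have hz' : ∀ j : Fin n, |z j| ≤ s' := by
      intro j
      have h1 := hz j (Set.mem_univ j)
      have h2 : -s' < z j ∧ z j < s' := h1
      exact (abs_lt.2 h2).le
    rw [EuclideanSpace.norm_eq]
    have hn1 : (0:ℝ) < (n:ℝ) + 1 := by positivity
    have hsum : (∑ i, ‖z i‖ ^ 2) ≤ (n:ℝ) * s' ^ 2 := by
      calc (∑ i, ‖z i‖ ^ 2) ≤ ∑ _i : Fin n, s' ^ 2 := by
            apply Finset.sum_le_sum
            intro i _
            rw [Real.norm_eq_abs, show |z i| ^ 2 = |z i| * |z i| by ring,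
              show s' ^ 2 = s' * s' by ring]
            exact mul_le_mul (hz' i) (hz' i) (abs_nonneg _) hs'pos.le
        _ = (n:ℝ) * s' ^ 2 := by
            rw [Finset.sum_const, Finset.card_univ, Fintype.card_fin, nsmul_eq_mul]
    have hlt : (n:ℝ) * s' ^ 2 < s ^ 2 := by
      have e2 : s' ^ 2 = s ^ 2 / ((n:ℝ) + 1) := by
        rw [hs'def, div_pow, Real.sq_sqrt hn1.le]
      rw [e2, show (n:ℝ) * (s ^ 2 / ((n:ℝ) + 1)) = s ^ 2 * ((n:ℝ) / ((n:ℝ) + 1)) by ring]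
      calc s ^ 2 * ((n:ℝ) / ((n:ℝ) + 1)) < s ^ 2 * 1 := by
            apply mul_lt_mul_of_pos_left _ (pow_pos hs 2)
            rw [div_lt_one hn1]
            linarith
        _ = s ^ 2 := mul_one _
    calc Real.sqrt (∑ i, ‖z i‖ ^ 2) ≤ Real.sqrt ((n:ℝ) * s' ^ 2) := Real.sqrt_le_sqrt hsum
      _ < Real.sqrt (s ^ 2) := Real.sqrt_lt_sqrt (by positivity) hlt
      _ = s := Real.sqrt_sq hs.le
  have nonnegae : ∀ S : Set (EuclideanSpace ℝ (Fin n)),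
      0 ≤ᵐ[volume.restrict S] fun z : EuclideanSpace ℝ (Fin n) => ∏ j, f j (z j) := by
    intro S
    filter_upwards with z using Finset.prod_nonneg fun j _ => hf0 j (z j)
  have upper : (∫ z in Metric.ball (0 : EuclideanSpace ℝ (Fin n)) s, ∏ j, f j (z j)) ≤ 1 := by
    have h1 : (∫ z in Metric.ball (0 : EuclideanSpace ℝ (Fin n)) s, ∏ j, f j (z j))
        ≤ ∫ z in Q s, ∏ j, f j (z j) :=
      setIntegral_mono_set hint (nonnegae _) (HasSubset.Subset.eventuallyLE hsub1)
    refine h1.trans ?_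
    rw [transfer s]
    have h2 : ∀ j : Fin n, (∫ u in Set.Ioo (-s) s, f j u) = 1 := by
      intro j
      simp only [hfdef]
      rw [f_one_int (l j) (x j) (Vplus (l j) (x j) s) s]
      exact div_self (hVpos j).ne'
    rw [Finset.prod_congr rfl fun j _ => h2 j, Finset.prod_const_one]
  have hball_int : IntegrableOn (fun z : EuclideanSpace ℝ (Fin n) => ∏ j, f j (z j))
      (Metric.ball (0 : EuclideanSpace ℝ (Fin n)) s) := hint.mono_set hsub1
  have lower : (∏ j, κ j) ≤ ∫ z in Metric.ball (0 : EuclideanSpace ℝ (Fin n)) s,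
      ∏ j, f j (z j) := by
    have h2 : (∫ z in Q s', ∏ j, f j (z j))
        ≤ ∫ z in Metric.ball (0 : EuclideanSpace ℝ (Fin n)) s, ∏ j, f j (z j) :=
      setIntegral_mono_set hball_int (nonnegae _) (HasSubset.Subset.eventuallyLE hsub2)
    refine le_trans ?_ h2
    rw [transfer s']
    apply Finset.prod_le_prod (fun j _ => (hκpos j).le)
    intro j _
    simp only [hfdef]
    rw [f_one_int (l j) (x j) (Vplus (l j) (x j) s) s', le_div_iff₀ (hVpos j)]
    exact hκ j (x j) s (hx j) hs
  constructor
  · refine le_trans lower (le_of_eq ?_)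
    congr 1
    funext z
    exact (hg_eq z).symm
  · refine le_trans (le_of_eq ?_) upper
    congr 1
    funext z
    exact hg_eq z
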